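/- Let r, s, C ∈ ℂ with s = r^j for some integer j ≥ 0 and C ≠ 0, and with r ≠ 0. Let f(x,y) = Σ_{i=0}^{b} g_i(x) y^i be a two-variable polynomial over ℂ of degree (a,b) in the ordering where (i,j) > (i',j') iff j > j' or (j = j' and i > i'), and assume deg g_i(x) < o(r) for each 0 ≤ i ≤ b (where o(r) is the multiplicative order of r, possibly ∞). If f(r·x, s·C·x^j + s·y) = r^a s^b · f(x,y) as polynomials, then f(x,y) is a constant multiple of x^a (in particular b = 0). -/
import Mathlib

open Polynomial

lemma coeff_comp_CmulX {R : Type*} [CommSemiring R] (p : R[X]) (v : R) (k : ℕ) :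
    (p.comp (C v * X)).coeff k = v ^ k * p.coeff k := by
  induction p using Polynomial.induction_on' with
  | add p q hp hq => simp [add_comp, hp, hq, mul_add]
  | monomial n c =>
    simp only [monomial_comp, mul_pow, coeff_monomial, ← C_pow, coeff_C_mul, coeff_X_pow]
    rcases eq_or_ne k n with h | h
    · simp [h, mul_comm]
    · simp [h, h.symm]

lemma coeff_comp_linear {R : Type*} [CommRing R] (p : R[X]) (u v : R) (k : ℕ) :
    (p.comp (C u + C v * X)).coeff k = v ^ k * ((p.hasseDeriv k).eval u) := by
  rw [show (C u + C v * X : R[X]) = (X + C u).comp (C v * X) by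
      simp [add_comp, add_comm],
    ← comp_assoc, coeff_comp_CmulX, ← taylor_apply, taylor_coeff]

theorem stmt5 (r s C0 : ℂ) (j : ℕ) (hr : r ≠ 0) (hs : s = r ^ j) (hC : C0 ≠ 0)
    (f : Polynomial (Polynomial ℂ)) (a b : ℕ)
    (hb : b = f.natDegree) (ha : a = (f.coeff b).natDegree)
    (hdeg : ∀ k : ℕ, 0 < k → r ^ k = 1 → ∀ i ≤ b, (f.coeff i).natDegree < k)
    (heq : (f.map (aeval (C r * X)).toRingHom).comp
        (C (C s * C C0 * X ^ j) + C (C s) * X)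
      = C (C (r ^ a * s ^ b)) * f) :
    ∃ c : ℂ, f = C (C c * X ^ a) := by
  have hs0 : s ≠ 0 := by simpa [hs] using pow_ne_zero j hr
  set P := f.map (aeval (C r * X)).toRingHom with hPdef
  have hPc : ∀ i, P.coeff i = (f.coeff i).comp (C r * X) := fun i => by
    rw [hPdef, coeff_map]; rfl
  have hPdeg : P.natDegree ≤ b := by rw [hb]; exact natDegree_map_le
  have key : ∀ k, (C s : ℂ[X]) ^ k * ((P.hasseDeriv k).eval (C s * C C0 * X ^ j))
      = C (r ^ a * s ^ b) * f.coeff k := by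
    intro k
    have h := congrArg (fun p => p.coeff k) heq
    simpa only [coeff_comp_linear, coeff_C_mul] using h
  -- top coefficient equation
  have hhb : P.hasseDeriv b = C (P.coeff b) := by
    have h1 : (P.hasseDeriv b).natDegree ≤ 0 :=
      le_trans (natDegree_hasseDeriv_le P b) (by omega)
    rw [eq_C_of_natDegree_le_zero h1, hasseDeriv_coeff]
    simp
  have hgb : (f.coeff b).comp (C r * X) = C (r ^ a) * f.coeff b := by
    have h := key b
    rw [hhb, eval_C, hPc, ← C_pow] at h
    have h2 : C (s ^ b) * ((f.coeff b).comp (C r * X))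
        = C (s ^ b) * (C (r ^ a) * f.coeff b) := by
      rw [h, mul_comm (r ^ a) (s ^ b), C_mul, mul_assoc]
    exact mul_left_cancel₀ (by simpa using pow_ne_zero b hs0) h2
  have hcoef : ∀ k, r ^ k * (f.coeff b).coeff k = r ^ a * (f.coeff b).coeff k := by
    intro k
    have h := congrArg (fun p => p.coeff k) hgb
    simpa only [coeff_comp_CmulX, coeff_C_mul] using h
  have hA : ∀ k, k ≠ a → (f.coeff b).coeff k = 0 := by
    intro k hk
    by_contra h0
    have hk_le : k ≤ a := ha ▸ le_natDegree_of_ne_zero h0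
    have hk_lt : k < a := lt_of_le_of_ne hk_le hk
    have hrka : r ^ k = r ^ a := mul_right_cancel₀ h0 (hcoef k)
    have hru : r ^ (a - k) = 1 := by
      have h2 : r ^ k * r ^ (a - k) = r ^ k * 1 := by
        rw [mul_one, ← pow_add, show k + (a - k) = a by omega]; exact hrka.symm
      exact mul_left_cancel₀ (pow_ne_zero k hr) h2
    have h3 := hdeg (a - k) (by omega) hru b le_rfl
    rw [← ha] at h3
    omega
  have hgbA : f.coeff b = C ((f.coeff b).coeff a) * X ^ a := by
    ext k
    rcases eq_or_ne k a with rfl | hk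
    · simp
    · simp [coeff_C_mul, coeff_X_pow, hk, hA k hk]
  cases b with
  | zero =>
    refine ⟨(f.coeff 0).coeff a, ?_⟩
    conv_lhs => rw [eq_C_of_natDegree_le_zero (le_of_eq hb.symm), hgbA]
  | succ m =>
    exfalso
    have hf : f ≠ 0 := fun h => by simp [h] at hb
    set c := (f.coeff (m + 1)).coeff a with hcdef
    have hc : c ≠ 0 := by
      have : f.coeff (m + 1) ≠ 0 := by
        rw [hb]; exact fun h => hf (leadingCoeff_eq_zero.mp h)
      rw [hcdef, ha]
      exact fun h => this (leadingCoeff_eq_zero.mp h)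
    -- the (b-1) coefficient equation
    have hQn : (P.hasseDeriv m).natDegree ≤ 1 :=
      le_trans (natDegree_hasseDeriv_le P m) (by omega)
    have e1 : P.coeff (m + 1) = C (r ^ a * c) * X ^ a := by
      rw [hPc, hgb, hgbA, C_mul, mul_assoc]
    have hc10 : ((P.hasseDeriv m).coeff 1 : ℂ[X]) = ((m + 1 : ℕ) : ℂ[X]) * (C (r ^ a * c) * X ^ a) := by
      rw [hasseDeriv_coeff, show 1 + m = m + 1 by omega, Nat.choose_succ_self_right, e1]
    have hc00 : ((P.hasseDeriv m).coeff 0 : ℂ[X]) = (f.coeff m).comp (C r * X) := by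
      rw [hasseDeriv_coeff, zero_add, Nat.choose_self, Nat.cast_one, one_mul, hPc]
    have Em := key m
    rw [eq_X_add_C_of_natDegree_le_one hQn, hc10, hc00, eval_add, eval_mul, eval_C, eval_X,
      eval_C] at Em
    have hterm : (((m + 1 : ℕ)) : ℂ[X]) * (C (r ^ a * c) * X ^ a) * (C s * C C0 * X ^ j)
        = C (((m + 1 : ℕ) : ℂ) * (r ^ a * c) * (s * C0)) * X ^ (a + j) := by
      simp only [C_mul, C_eq_natCast, pow_add]
      ring
    rw [hterm] at Em
    have E := congrArg (fun p => p.coeff (a + j)) Em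
    simp only [← C_pow, coeff_C_mul, coeff_add, coeff_X_pow, coeff_comp_CmulX, if_pos rfl, if_true,
      mul_one] at E
    set d := (f.coeff m).coeff (a + j) with hddef
    rw [hs, pow_add, pow_succ] at E
    have hz : ((m + 1 : ℕ) : ℂ) * r ^ a * c * r ^ j * C0 * (r ^ j) ^ m = 0 := by
      linear_combination E
    have hm1 : ((m + 1 : ℕ) : ℂ) ≠ 0 := Nat.cast_ne_zero.mpr (Nat.succ_ne_zero m)
    simp only [mul_eq_zero, pow_eq_zero_iff'] at hz
    tauto
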